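/- Fix k ≥ 1 and the two-letter alphabet {a, b}. Every nondeterministic finite automaton M with a finite state type whose accepted language is exactly the singleton {a·a·b^k·a·a} has at least k + 5 states and at least k + 4 transitions. -/

import Mathlib

/-- The letter `a` of the two-letter alphabet `{a, b}`, modeled as `Bool`. -/
def la : Bool := true

/-- The letter `b` of the two-letter alphabet `{a, b}`, modeled as `Bool`. -/
def lb : Bool := false

/-- The word `a·a·b^k·a·a`. -/
def aabkaa (k : ℕ) : List Bool := [la, la] ++ List.replicate k lb ++ [la, la]

namespace AabkaaAux

variable {σ : Type*} (M : NFA Bool σ)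

lemma stepSet_mono {S T : Set σ} (h : S ⊆ T) (a : Bool) : M.stepSet S a ⊆ M.stepSet T a := by
  intro q hq
  rw [NFA.mem_stepSet] at hq ⊢
  obtain ⟨t, ht, hq⟩ := hq
  exact ⟨t, h ht, hq⟩

lemma evalFrom_mono {S T : Set σ} (h : S ⊆ T) (w : List Bool) :
    M.evalFrom S w ⊆ M.evalFrom T w := by
  induction w generalizing S T with
  | nil => simpa using h
  | cons a w ih =>
    show M.evalFrom (M.stepSet S a) w ⊆ M.evalFrom (M.stepSet T a) w
    exact ih (stepSet_mono M h a)

lemma evalFrom_append (S : Set σ) (x y : List Bool) :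
    M.evalFrom S (x ++ y) = M.evalFrom (M.evalFrom S x) y := by
  simp [NFA.evalFrom, List.foldl_append]

lemma run_exists (w : List Bool) (S : Set σ) (q : σ) (h : q ∈ M.evalFrom S w) :
    ∃ f : ℕ → σ, f 0 ∈ S ∧ (∀ i, (hi : i < w.length) → f (i + 1) ∈ M.step (f i) w[i]) ∧
      f w.length = q := by
  induction w generalizing S with
  | nil => exact ⟨fun _ => q, h, by simp, rfl⟩
  | cons a w ih =>
    have h' : q ∈ M.evalFrom (M.stepSet S a) w := h
    obtain ⟨g, hg0, hgstep, hglast⟩ := ih _ h'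
    rw [NFA.mem_stepSet] at hg0
    obtain ⟨s, hs, hg0⟩ := hg0
    refine ⟨fun n => match n with | 0 => s | n + 1 => g n, hs, ?_, hglast⟩
    intro i hi
    match i with
    | 0 => exact hg0
    | i + 1 =>
      simp only [List.length_cons, Nat.add_lt_add_iff_right] at hi
      simpa using hgstep i hi

lemma run_prefix (w : List Bool) (S : Set σ) (f : ℕ → σ) (hf0 : f 0 ∈ S)
    (hfstep : ∀ i, (hi : i < w.length) → f (i + 1) ∈ M.step (f i) w[i]) :
    ∀ i, i ≤ w.length → f i ∈ M.evalFrom S (w.take i) := by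
  intro i
  induction i with
  | zero => intro _; simpa using hf0
  | succ i ih =>
    intro hi
    have hi' : i < w.length := hi
    have htake : w.take (i + 1) = w.take i ++ [w[i]] := by
      rw [List.take_succ, List.getElem?_eq_getElem hi']
      rfl
    rw [htake, NFA.evalFrom_append, NFA.evalFrom_singleton, NFA.mem_stepSet]
    exact ⟨f i, ih (le_of_lt hi'), hfstep i hi'⟩

lemma run_suffix (w : List Bool) (f : ℕ → σ)
    (hfstep : ∀ i, (hi : i < w.length) → f (i + 1) ∈ M.step (f i) w[i]) :
    ∀ m j, j + m = w.length → f w.length ∈ M.evalFrom {f j} (w.drop j) := by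
  intro m
  induction m with
  | zero =>
    intro j hj
    subst hj
    simp
  | succ m ih =>
    intro j hj
    have hjlt : j < w.length := by omega
    have hdrop : w.drop j = w[j] :: w.drop (j + 1) := List.drop_eq_getElem_cons hjlt
    rw [hdrop]
    show f w.length ∈ M.evalFrom (M.stepSet {f j} w[j]) (w.drop (j + 1))
    refine evalFrom_mono M ?_ _ (ih (j + 1) (by omega))
    intro q hq
    rw [Set.mem_singleton_iff] at hq
    rw [NFA.mem_stepSet]
    exact ⟨f j, rfl, hq ▸ hfstep j hjlt⟩

end AabkaaAux

/-- Every NFA with finite state type accepting exactly `{a·a·b^k·a·a}` (for `k ≥ 1`)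
has at least `k + 5` states and at least `k + 4` transitions. -/
theorem nfa_singleton_aabkaa_lower_bounds
    (k : ℕ) (hk : 1 ≤ k) (σ : Type*) [Fintype σ] (M : NFA Bool σ)
    (hL : (M.accepts : Set (List Bool)) = {aabkaa k}) :
    k + 5 ≤ Fintype.card σ ∧
    k + 4 ≤ Set.ncard {t : σ × Bool × σ | t.2.2 ∈ M.step t.1 t.2.1} := by
  set w := aabkaa k with hw
  have hwlen : w.length = k + 4 := by
    simp [hw, aabkaa]
  have hacc : w ∈ M.accepts := by rw [hL]; rfl
  rw [NFA.mem_accepts] at hacc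
  obtain ⟨q, hqacc, hqeval⟩ := hacc
  obtain ⟨f, hf0, hfstep, hflast⟩ := AabkaaAux.run_exists M w M.start q hqeval
  -- the states f 0, ..., f (k+4) are pairwise distinct
  have hinj : ∀ i j, i < j → j ≤ w.length → f i ≠ f j := by
    intro i j hij hjle heq
    -- pumped word
    have h1 : f i ∈ M.evalFrom M.start (w.take i) :=
      AabkaaAux.run_prefix M w M.start f hf0 hfstep i (by omega)
    have h2 : f w.length ∈ M.evalFrom {f j} (w.drop j) :=
      AabkaaAux.run_suffix M w f hfstep (w.length - j) j (by omega)
    rw [← heq] at h2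
    have h3 : f w.length ∈ M.evalFrom M.start (w.take i ++ w.drop j) := by
      rw [show w.take i ++ w.drop j = (w.take i) ++ (w.drop j) from rfl,
        AabkaaAux.evalFrom_append]
      refine AabkaaAux.evalFrom_mono M ?_ _ h2
      intro x hx
      rw [Set.mem_singleton_iff] at hx
      exact hx ▸ h1
    have hacc' : (w.take i ++ w.drop j) ∈ M.accepts := by
      rw [NFA.mem_accepts]
      exact ⟨q, hqacc, hflast ▸ h3⟩
    rw [hL] at hacc'; change w.take i ++ w.drop j = w at hacc'
    have := congrArg List.length hacc'
    simp [hw] at this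
    rw [← hw] at this
    have hlen' : min i w.length + (w.length - j) = w.length := by
      simpa [hwlen] using this
    omega
  constructor
  · -- states
    by_contra hcard
    push_neg at hcard
    have : Fintype.card σ < Fintype.card (Fin (k + 5)) := by simpa using hcard
    obtain ⟨i, j, hne, heq⟩ :=
      Fintype.exists_ne_map_eq_of_card_lt (fun i : Fin (k + 5) => f i) this
    rcases lt_or_gt_of_ne (fun h : (i : ℕ) = j => hne (Fin.ext h)) with h | h
    · exact hinj i j h (by omega) heq
    · exact hinj j i h (by omega) heq.symm
  · -- transitions
    set T : Set (σ × Bool × σ) := {t : σ × Bool × σ | t.2.2 ∈ M.step t.1 t.2.1} with hT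
    have hfin : T.Finite := Set.toFinite T
    have hmap : ∀ i : Fin (k + 4), (f i, w[(i : ℕ)]'(by omega), f (i + 1)) ∈ T := by
      intro i
      exact hfstep i (by omega)
    have hle : k + 4 ≤ hfin.toFinset.card := by
      have := Finset.card_le_card_of_injOn
        (f := fun i : Fin (k + 4) => (f (i : ℕ), w[(i : ℕ)]'(by omega), f ((i : ℕ) + 1)))
        (s := Finset.univ) (t := hfin.toFinset)
        (by intro i _; simpa using hmap i)
        (by
          intro i _ j _ heq
          have h1 : f (i : ℕ) = f (j : ℕ) := congrArg Prod.fst heq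
          by_contra hne
          have hij : (i : ℕ) ≠ (j : ℕ) := fun h => hne (Fin.ext h)
          rcases lt_or_gt_of_ne hij with h | h
          · exact hinj i j h (by omega) h1
          · exact hinj j i h (by omega) h1.symm)
      simpa using this
    exact hle.trans_eq (Set.ncard_eq_toFinset_card T hfin).symm
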